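/- arXiv:2407.11029 — 5 statements merged into one kernel-verified Lean document; each statement's English description precedes it below -/
import Mathlib

section
/- (Exact Kernel Ensemble Representation.) Suppose additionally that the initial model output is constant: there is b ∈ ℝ with f(w_0, x) = b for all x ∈ ℝ^d. Then for every test point x ∈ ℝ^d the trained model prediction has the exact ensemble-of-kernel-machines representation f(w_S, x) = b + Σ_{s=0}^{S−1} Σ_{i=1}^N a_{i,s} K_EPK(x, x_i, s), where a_{i,s} = −ε L'(f(w_s, x_i), y_i) and K_EPK(x, x', s) = ∫₀¹ ⟨∇_w f(w_s(t), x), ∇_w f(w_s, x')⟩ dt. -/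
open scoped RealInnerProductSpace
open MeasureTheory

lemma seg_ftc (M d : ℕ)
    (f : EuclideanSpace ℝ (Fin M) → EuclideanSpace ℝ (Fin d) → ℝ)
    (grad : EuclideanSpace ℝ (Fin M) → EuclideanSpace ℝ (Fin d) → EuclideanSpace ℝ (Fin M))
    (hgrad : ∀ (x : EuclideanSpace ℝ (Fin d)) (w : EuclideanSpace ℝ (Fin M)),
      HasGradientAt (fun w' => f w' x) (grad w x) w)
    (hgradCont : ∀ x : EuclideanSpace ℝ (Fin d), Continuous fun w => grad w x)
    (x : EuclideanSpace ℝ (Fin d)) (w v : EuclideanSpace ℝ (Fin M)) :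
    ∫ t in (0:ℝ)..1, ⟪grad (w + t • v) x, v⟫ = f (w + v) x - f w x := by
  have hderiv : ∀ t ∈ Set.uIcc (0:ℝ) 1,
      HasDerivAt (fun t : ℝ => f (w + t • v) x) ⟪grad (w + t • v) x, v⟫ t := by
    intro t _
    have hline : HasDerivAt (fun t : ℝ => w + t • v) v t := by
      simpa using ((hasDerivAt_id t).smul_const v).const_add w
    have hf := (hgrad x (w + t • v)).hasFDerivAt
    have := hf.comp_hasDerivAt t hline
    simp [InnerProductSpace.toDual_apply_apply] at this; exact this
  have hcont : Continuous fun t : ℝ => ⟪grad (w + t • v) x, v⟫ := by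
    exact (((hgradCont x).comp (by continuity)).inner continuous_const)
  have := intervalIntegral.integral_eq_sub_of_hasDerivAt hderiv
    (hcont.intervalIntegrable 0 1)
  simpa using this

/-- **Exact Kernel Ensemble Representation.** If the initial model output is constant,
`f(w_0, x) = b` for all `x`, then the trained prediction is exactly an ensemble of kernel
machines: `f(w_S, x) = b + Σ_{s<S} Σ_i a_{i,s} K_EPK(x, x_i, s)` where
`a_{i,s} = −ε L'(f(w_s, x_i), y_i)` and
`K_EPK(x, x', s) = ∫₀¹ ⟨∇_w f(w_s(t), x), ∇_w f(w_s, x')⟩ dt`. -/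
theorem exact_kernel_ensemble_representation
    (M d N S : ℕ)
    (f : EuclideanSpace ℝ (Fin M) → EuclideanSpace ℝ (Fin d) → ℝ)
    (grad : EuclideanSpace ℝ (Fin M) → EuclideanSpace ℝ (Fin d) → EuclideanSpace ℝ (Fin M))
    (hgrad : ∀ (x : EuclideanSpace ℝ (Fin d)) (w : EuclideanSpace ℝ (Fin M)),
      HasGradientAt (fun w' => f w' x) (grad w x) w)
    (hgradCont : ∀ x : EuclideanSpace ℝ (Fin d), Continuous fun w => grad w x)
    (X : Fin N → EuclideanSpace ℝ (Fin d)) (Y : Fin N → ℝ)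
    (L L' : ℝ → ℝ → ℝ)
    (hL : ∀ a b : ℝ, HasDerivAt (fun a' => L a' b) (L' a b) a)
    (ε : ℝ) (hε : 0 < ε)
    (w : ℕ → EuclideanSpace ℝ (Fin M))
    (hupdate : ∀ s : ℕ,
      w (s + 1) = w s - ε • ∑ i, L' (f (w s) (X i)) (Y i) • grad (w s) (X i))
    (b : ℝ) (hb : ∀ x : EuclideanSpace ℝ (Fin d), f (w 0) x = b) :
    ∀ x : EuclideanSpace ℝ (Fin d),
      f (w S) x =
        b + ∑ s ∈ Finset.range S, ∑ i,
          (-ε * L' (f (w s) (X i)) (Y i)) *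
            ∫ t in (0:ℝ)..1, ⟪grad (w s + t • (w (s + 1) - w s)) x, grad (w s) (X i)⟫ := by
  intro x
  induction S with
  | zero => simp [hb x]
  | succ S ih =>
    rw [Finset.sum_range_succ, ← add_assoc, ← ih]
    set Δ := w (S + 1) - w S with hΔ
    have hstep : f (w (S + 1)) x = f (w S) x + ∫ t in (0:ℝ)..1, ⟪grad (w S + t • Δ) x, Δ⟫ := by
      have := seg_ftc M d f grad hgrad hgradCont x (w S) Δ
      rw [this]
      simp [hΔ]
    rw [hstep]
    congr 1
    have hinner : ∀ g : EuclideanSpace ℝ (Fin M),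
        ⟪g, Δ⟫ = ∑ i, (-ε * L' (f (w S) (X i)) (Y i)) * ⟪g, grad (w S) (X i)⟫ := by
      intro g
      have : Δ = -(ε • ∑ i, L' (f (w S) (X i)) (Y i) • grad (w S) (X i)) := by
        rw [hΔ, hupdate S]; abel
      rw [this, inner_neg_right, inner_smul_right, inner_sum]
      rw [Finset.mul_sum, ← Finset.sum_neg_distrib]
      exact Finset.sum_congr rfl fun i _ => by rw [inner_smul_right]; ring
    simp_rw [hinner]
    rw [intervalIntegral.integral_finset_sum]
    · exact Finset.sum_congr rfl fun i _ => intervalIntegral.integral_const_mul _ _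
    · intro i _
      exact (continuous_const.mul (((hgradCont x).comp
        (continuous_const.add (continuous_id.smul continuous_const))).inner
        continuous_const)).intervalIntegrable 0 1
end

section
/- (Exact Kernel Machine Reduction.) Suppose the initial model output is constant, f(w_0, x) = b for all x, and that the loss derivatives do not change across training steps: L'(f(w_s, x_i), y_i) = L'(f(w_0, x_i), y_i) for all steps s and all i. Then the ensemble representation reduces exactly to a single kernel machine: for every x ∈ ℝ^d, f(w_S, x) = b + Σ_{i=1}^N a_{i,0} K(x, x_i), where a_{i,0} = −ε L'(f(w_0, x_i), y_i) and K(x, x') = Σ_{s=0}^{S−1} ∫₀¹ ⟨∇_w f(w_s(t), x), ∇_w f(w_s, x')⟩ dt. -/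
open scoped RealInnerProductSpace
open MeasureTheory

/-- **Exact Kernel Machine Reduction.** If the initial model output is constant and the loss
derivatives do not change across training steps, then the ensemble representation reduces to a
single kernel machine: `f(w_S, x) = b + Σ_i a_{i,0} K(x, x_i)` with
`a_{i,0} = −ε L'(f(w_0, x_i), y_i)` and
`K(x, x') = Σ_{s<S} ∫₀¹ ⟨∇_w f(w_s(t), x), ∇_w f(w_s, x')⟩ dt`. -/
theorem exact_kernel_machine_reduction
    (M d N S : ℕ)
    (f : EuclideanSpace ℝ (Fin M) → EuclideanSpace ℝ (Fin d) → ℝ)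
    (grad : EuclideanSpace ℝ (Fin M) → EuclideanSpace ℝ (Fin d) → EuclideanSpace ℝ (Fin M))
    (hgrad : ∀ (x : EuclideanSpace ℝ (Fin d)) (w : EuclideanSpace ℝ (Fin M)),
      HasGradientAt (fun w' => f w' x) (grad w x) w)
    (hgradCont : ∀ x : EuclideanSpace ℝ (Fin d), Continuous fun w => grad w x)
    (X : Fin N → EuclideanSpace ℝ (Fin d)) (Y : Fin N → ℝ)
    (L L' : ℝ → ℝ → ℝ)
    (hL : ∀ a b : ℝ, HasDerivAt (fun a' => L a' b) (L' a b) a)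
    (ε : ℝ) (hε : 0 < ε)
    (w : ℕ → EuclideanSpace ℝ (Fin M))
    (hupdate : ∀ s : ℕ,
      w (s + 1) = w s - ε • ∑ i, L' (f (w s) (X i)) (Y i) • grad (w s) (X i))
    (b : ℝ) (hb : ∀ x : EuclideanSpace ℝ (Fin d), f (w 0) x = b)
    (hconst : ∀ s : ℕ, s < S → ∀ i : Fin N,
      L' (f (w s) (X i)) (Y i) = L' (f (w 0) (X i)) (Y i)) :
    ∀ x : EuclideanSpace ℝ (Fin d),
      f (w S) x =
        b + ∑ i,
          (-ε * L' (f (w 0) (X i)) (Y i)) *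
            ∑ s ∈ Finset.range S,
              ∫ t in (0:ℝ)..1, ⟪grad (w s + t • (w (s + 1) - w s)) x, grad (w s) (X i)⟫ := by
  intro x
  -- derivative along a segment
  have hderiv : ∀ (a v : EuclideanSpace ℝ (Fin M)) (t : ℝ),
      HasDerivAt (fun t : ℝ => f (a + t • v) x) ⟪grad (a + t • v) x, v⟫ t := by
    intro a v t
    have h1 : HasDerivAt (fun t : ℝ => a + t • v) v t := by
      simpa using ((hasDerivAt_id t).smul_const v).const_add a
    have h2 := (hgrad x (a + t • v)).hasFDerivAt
    have h3 := h2.comp_hasDerivAt t h1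
    simp at h3
    exact h3
  have hcont : ∀ (a v u : EuclideanSpace ℝ (Fin M)),
      Continuous fun t : ℝ => ⟪grad (a + t • v) x, u⟫ := by
    intro a v u
    exact ((hgradCont x).comp (by continuity)).inner continuous_const
  -- fundamental theorem of calculus along a segment
  have hseg : ∀ (a v : EuclideanSpace ℝ (Fin M)),
      f (a + v) x - f a x = ∫ t in (0:ℝ)..1, ⟪grad (a + t • v) x, v⟫ := by
    intro a v
    rw [intervalIntegral.integral_eq_sub_of_hasDerivAt (fun t _ => hderiv a v t)
      ((hcont a v v).intervalIntegrable 0 1)]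
    simp
  -- telescoping sum
  have hmain : ∀ n : ℕ, f (w n) x = f (w 0) x +
      ∑ s ∈ Finset.range n,
        ∫ t in (0:ℝ)..1, ⟪grad (w s + t • (w (s + 1) - w s)) x, w (s + 1) - w s⟫ := by
    intro n
    induction n with
    | zero => simp
    | succ n ih =>
      rw [Finset.sum_range_succ, ← add_assoc, ← ih]
      have h := hseg (w n) (w (n + 1) - w n)
      rw [add_sub_cancel] at h
      linarith
  rw [hmain S, hb x]
  congr 1
  have hterm : ∀ s ∈ Finset.range S,
      (∫ t in (0:ℝ)..1, ⟪grad (w s + t • (w (s + 1) - w s)) x, w (s + 1) - w s⟫)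
      = ∑ i, (-ε * L' (f (w 0) (X i)) (Y i)) *
          ∫ t in (0:ℝ)..1, ⟪grad (w s + t • (w (s + 1) - w s)) x, grad (w s) (X i)⟫ := by
    intro s hs
    have hd : w (s + 1) - w s = ∑ i, (-ε * L' (f (w 0) (X i)) (Y i)) • grad (w s) (X i) := by
      rw [hupdate s, sub_sub_cancel_left, ← neg_smul, Finset.smul_sum]
      refine Finset.sum_congr rfl fun i _ => ?_
      rw [smul_smul, hconst s (Finset.mem_range.mp hs) i]
    have key : ∀ t : ℝ,
        ⟪grad (w s + t • (w (s + 1) - w s)) x, w (s + 1) - w s⟫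
        = ∑ i, (-ε * L' (f (w 0) (X i)) (Y i)) *
            ⟪grad (w s + t • (w (s + 1) - w s)) x, grad (w s) (X i)⟫ := by
      intro t
      nth_rewrite 2 [hd]
      rw [inner_sum]
      exact Finset.sum_congr rfl fun i _ => by rw [real_inner_smul_right]
    simp_rw [key]
    rw [intervalIntegral.integral_finset_sum]
    · refine Finset.sum_congr rfl fun i _ => ?_
      rw [intervalIntegral.integral_const_mul]
    · intro i _
      exact (continuous_const.mul (hcont (w s) (w (s + 1) - w s) (grad (w s) (X i)))).intervalIntegrable 0 1
  rw [Finset.sum_congr rfl hterm, Finset.sum_comm]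
  exact Finset.sum_congr rfl fun i _ => by rw [Finset.mul_sum]
end

section
/- (Generalized Exact Path Kernel representation.) For every test point x ∈ ℝ^d, the trained model prediction decomposes exactly into the initial prediction plus a learned adjustment over all training steps and all training points: f(w_S, x) = f(w_0, x) − ε Σ_{s=0}^{S−1} Σ_{i=1}^N L'(f(w_s, x_i), y_i) ∫₀¹ ⟨∇_w f(w_s(t), x), ∇_w f(w_s, x_i)⟩ dt. No assumption on the initial output f(w_0, ·) is required. -/
open scoped RealInnerProductSpace
open MeasureTheory

private lemma segment_hasDerivAt {M : ℕ} (w0 w1 : EuclideanSpace ℝ (Fin M)) (t : ℝ) :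
    HasDerivAt (fun t : ℝ => w0 + t • (w1 - w0)) (w1 - w0) t := by
  simpa using ((hasDerivAt_id t).smul_const (w1 - w0)).const_add w0

/-- FTC step: change of `f` along the segment equals inner product of averaged gradient. -/
private lemma ftc_step {M d : ℕ}
    (f : EuclideanSpace ℝ (Fin M) → EuclideanSpace ℝ (Fin d) → ℝ)
    (grad : EuclideanSpace ℝ (Fin M) → EuclideanSpace ℝ (Fin d) → EuclideanSpace ℝ (Fin M))
    (hgrad : ∀ (x : EuclideanSpace ℝ (Fin d)) (w : EuclideanSpace ℝ (Fin M)),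
      HasGradientAt (fun w' => f w' x) (grad w x) w)
    (hgradCont : ∀ x : EuclideanSpace ℝ (Fin d), Continuous fun w => grad w x)
    (x : EuclideanSpace ℝ (Fin d)) (w0 w1 : EuclideanSpace ℝ (Fin M)) :
    f w1 x - f w0 x =
      ⟪(∫ t in (0:ℝ)..1, grad (w0 + t • (w1 - w0)) x), w1 - w0⟫ := by
  set p : ℝ → EuclideanSpace ℝ (Fin M) := fun t => w0 + t • (w1 - w0) with hp
  have hpc : Continuous p := by
    apply Continuous.add continuous_const
    exact continuous_id.smul continuous_const
  have hderiv : ∀ t : ℝ, HasDerivAt (fun t => f (p t) x)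
      (⟪grad (p t) x, w1 - w0⟫) t := by
    intro t
    have h1 := (hgrad x (p t)).hasFDerivAt
    have h2 := h1.comp_hasDerivAt t (segment_hasDerivAt w0 w1 t)
    simp at h2
    exact h2
  have hcont : Continuous fun t : ℝ => grad (p t) x := (hgradCont x).comp hpc
  have hcont2 : Continuous fun t : ℝ => (⟪grad (p t) x, w1 - w0⟫ : ℝ) :=
    hcont.inner continuous_const
  have hint : IntervalIntegrable (fun t : ℝ => grad (p t) x) volume 0 1 :=
    hcont.intervalIntegrable 0 1
  have hftc : (∫ t in (0:ℝ)..1, ⟪grad (p t) x, w1 - w0⟫)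
      = f (p 1) x - f (p 0) x :=
    intervalIntegral.integral_eq_sub_of_hasDerivAt (fun t _ => hderiv t)
      (hcont2.intervalIntegrable 0 1)
  have hswap : (∫ t in (0:ℝ)..1, ⟪grad (p t) x, w1 - w0⟫)
      = ⟪(∫ t in (0:ℝ)..1, grad (p t) x), w1 - w0⟫ := by
    have := (innerSL ℝ (w1 - w0)).intervalIntegral_comp_comm hint
    simp only [innerSL_apply_apply] at this
    rw [real_inner_comm, ← this]
    exact intervalIntegral.integral_congr fun t _ => real_inner_comm _ _
  have hp0 : p 0 = w0 := by simp [hp]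
  have hp1 : p 1 = w1 := by simp [hp]
  rw [← hswap, hftc, hp0, hp1]

/-- **Generalized Exact Path Kernel representation.** For every test point `x`, the trained
prediction decomposes exactly into the initial prediction plus a learned adjustment:
`f(w_S, x) = f(w_0, x) − ε Σ_{s<S} Σ_i L'(f(w_s, x_i), y_i)
  ∫₀¹ ⟨∇_w f(w_s(t), x), ∇_w f(w_s, x_i)⟩ dt`.
No assumption on the initial output `f(w_0, ·)` is required. -/
theorem generalized_exact_path_kernel
    (M d N S : ℕ)
    (f : EuclideanSpace ℝ (Fin M) → EuclideanSpace ℝ (Fin d) → ℝ)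
    (grad : EuclideanSpace ℝ (Fin M) → EuclideanSpace ℝ (Fin d) → EuclideanSpace ℝ (Fin M))
    (hgrad : ∀ (x : EuclideanSpace ℝ (Fin d)) (w : EuclideanSpace ℝ (Fin M)),
      HasGradientAt (fun w' => f w' x) (grad w x) w)
    (hgradCont : ∀ x : EuclideanSpace ℝ (Fin d), Continuous fun w => grad w x)
    (X : Fin N → EuclideanSpace ℝ (Fin d)) (Y : Fin N → ℝ)
    (L L' : ℝ → ℝ → ℝ)
    (hL : ∀ a b : ℝ, HasDerivAt (fun a' => L a' b) (L' a b) a)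
    (ε : ℝ) (hε : 0 < ε)
    (w : ℕ → EuclideanSpace ℝ (Fin M))
    (hupdate : ∀ s : ℕ,
      w (s + 1) = w s - ε • ∑ i, L' (f (w s) (X i)) (Y i) • grad (w s) (X i)) :
    ∀ x : EuclideanSpace ℝ (Fin d),
      f (w S) x =
        f (w 0) x -
          ε * ∑ s ∈ Finset.range S, ∑ i,
            L' (f (w s) (X i)) (Y i) *
              ∫ t in (0:ℝ)..1, ⟪grad (w s + t • (w (s + 1) - w s)) x, grad (w s) (X i)⟫ := by
  intro x
  induction S with
  | zero => simp
  | succ S ih =>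
    have key : f (w (S + 1)) x - f (w S) x =
        - (ε * ∑ i, L' (f (w S) (X i)) (Y i) *
          ∫ t in (0:ℝ)..1, ⟪grad (w S + t • (w (S + 1) - w S)) x, grad (w S) (X i)⟫) := by
      have hstep := ftc_step f grad hgrad hgradCont x (w S) (w (S + 1))
      set G : EuclideanSpace ℝ (Fin M) :=
        ∫ t in (0:ℝ)..1, grad (w S + t • (w (S + 1) - w S)) x with hG
      have hΔ : w (S + 1) - w S =
          -(ε • ∑ i, L' (f (w S) (X i)) (Y i) • grad (w S) (X i)) := by
        rw [hupdate S]; abel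
      rw [hstep, hΔ, inner_neg_right, inner_smul_right, inner_sum, ← hΔ]
      congr 2
      refine Finset.sum_congr rfl fun i _ => ?_
      rw [real_inner_smul_right]
      have hGi : ⟪G, grad (w S) (X i)⟫ = ∫ t in (0:ℝ)..1,
          ⟪grad (w S + t • (w (S + 1) - w S)) x, grad (w S) (X i)⟫ := by
        have hpc : Continuous fun t : ℝ => w S + t • (w (S + 1) - w S) := by
          apply Continuous.add continuous_const
          exact continuous_id.smul continuous_const
        have hint : IntervalIntegrable
            (fun t : ℝ => grad (w S + t • (w (S + 1) - w S)) x) volume 0 1 :=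
          ((hgradCont x).comp hpc).intervalIntegrable 0 1
        have := (innerSL ℝ (grad (w S) (X i))).intervalIntegral_comp_comm hint
        simp only [innerSL_apply_apply] at this
        rw [hG, real_inner_comm, ← this]
        exact intervalIntegral.integral_congr fun t _ => real_inner_comm _ _
      rw [hGi]
    rw [Finset.sum_range_succ, mul_add]
    have : f (w (S + 1)) x = f (w S) x + (f (w (S + 1)) x - f (w S) x) := by ring
    rw [this, key, ih]
    ring
end

section
/- (Prediction Spanning Vectors.) Let x ∈ ℝ^d be a test point whose parameter gradient along the training path is orthogonal to every training-point parameter gradient, i.e. ⟨∇_w f(w_s(t), x), ∇_w f(w_s, x_i)⟩ = 0 for all i ∈ {1, …, N}, all s ∈ {0, …, S−1}, and all t ∈ [0,1]. Then the learned adjustment at x vanishes: f(w_S, x) = f(w_0, x). Consequently, only the component of a test gradient lying in the span of the training gradients {∇_w f(w_s, x_i) : 1 ≤ i ≤ N, 0 ≤ s ≤ S−1} contributes to the trained prediction. -/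
open scoped RealInnerProductSpace
open MeasureTheory

/-- **Prediction Spanning Vectors.** If the parameter gradient of the test point `x` along the
training path is orthogonal to every training-point parameter gradient
(`⟨∇_w f(w_s(t), x), ∇_w f(w_s, x_i)⟩ = 0` for all `i`, all `s < S`, all `t ∈ [0,1]`),
then the learned adjustment at `x` vanishes: `f(w_S, x) = f(w_0, x)`. -/
theorem prediction_spanning_vectors
    (M d N S : ℕ)
    (f : EuclideanSpace ℝ (Fin M) → EuclideanSpace ℝ (Fin d) → ℝ)
    (grad : EuclideanSpace ℝ (Fin M) → EuclideanSpace ℝ (Fin d) → EuclideanSpace ℝ (Fin M))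
    (hgrad : ∀ (x : EuclideanSpace ℝ (Fin d)) (w : EuclideanSpace ℝ (Fin M)),
      HasGradientAt (fun w' => f w' x) (grad w x) w)
    (hgradCont : ∀ x : EuclideanSpace ℝ (Fin d), Continuous fun w => grad w x)
    (X : Fin N → EuclideanSpace ℝ (Fin d)) (Y : Fin N → ℝ)
    (L L' : ℝ → ℝ → ℝ)
    (hL : ∀ a b : ℝ, HasDerivAt (fun a' => L a' b) (L' a b) a)
    (ε : ℝ) (hε : 0 < ε)
    (w : ℕ → EuclideanSpace ℝ (Fin M))
    (hupdate : ∀ s : ℕ,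
      w (s + 1) = w s - ε • ∑ i, L' (f (w s) (X i)) (Y i) • grad (w s) (X i))
    (x : EuclideanSpace ℝ (Fin d))
    (horth : ∀ (i : Fin N) (s : ℕ), s < S → ∀ t ∈ Set.Icc (0:ℝ) 1,
      ⟪grad (w s + t • (w (s + 1) - w s)) x, grad (w s) (X i)⟫ = 0) :
    f (w S) x = f (w 0) x := by
  -- One-step lemma: for each s < S, f (w (s+1)) x = f (w s) x.
  have step : ∀ s : ℕ, s < S → f (w (s + 1)) x = f (w s) x := by
    intro s hs
    set Δ : EuclideanSpace ℝ (Fin M) := w (s + 1) - w s with hΔ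
    set g : ℝ → ℝ := fun t => f (w s + t • Δ) x with hg
    -- derivative of g at any t
    have hder : ∀ t : ℝ, HasDerivAt g ⟪grad (w s + t • Δ) x, Δ⟫ t := by
      intro t
      have hc : HasDerivAt (fun t : ℝ => w s + t • Δ) Δ t := by
        simpa using ((hasDerivAt_id t).smul_const Δ).const_add (w s)
      have hf := (hgrad x (w s + t • Δ)).hasFDerivAt
      have := hf.comp_hasDerivAt t hc
      simp [InnerProductSpace.toDual_apply_apply] at this
      exact this
    -- the derivative is zero for t ∈ [0,1]
    have hzero : ∀ t ∈ Set.Icc (0:ℝ) 1, HasDerivAt g 0 t := by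
      intro t ht
      have h0 : ⟪grad (w s + t • Δ) x, Δ⟫ = 0 := by
        have hΔ' : Δ = -(ε • ∑ i, L' (f (w s) (X i)) (Y i) • grad (w s) (X i)) := by
          rw [hΔ, hupdate s]; abel
        rw [hΔ', inner_neg_right, inner_smul_right, inner_sum]
        have : ∀ i : Fin N,
            ⟪grad (w s + t • Δ) x, L' (f (w s) (X i)) (Y i) • grad (w s) (X i)⟫ = 0 := by
          intro i
          rw [inner_smul_right, horth i s hs t ht, mul_zero]
        simp only [← hΔ']
        rw [Finset.sum_eq_zero fun i _ => this i, mul_zero, neg_zero]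
      simpa [h0] using hder t
    have hcont : ContinuousOn g (Set.Icc 0 1) :=
      fun t _ => ((hder t).continuousAt).continuousWithinAt
    have hconst := constant_of_has_deriv_right_zero hcont
      (fun t ht => ((hzero t (Set.Ico_subset_Icc_self ht)).hasDerivWithinAt))
    have h1 := hconst 1 (by norm_num)
    simpa [hg, hΔ] using h1
  -- conclude by induction
  have : ∀ s : ℕ, s ≤ S → f (w s) x = f (w 0) x := by
    intro s hsS
    induction s with
    | zero => rfl
    | succ n ih =>
      rw [step n (by omega), ih (by omega)]
  exact this S le_rfl
end

section
/- (Gaussian annulus concentration.) Let x be a random vector in ℝ^n whose n coordinates are independent Gaussian random variables with mean 0 and variance σ². Then for every 0 ≤ ε ≤ √n, the Euclidean norm of x concentrates near σ√n: P[ |‖x‖₂ − σ√n| ≤ σε ] ≥ 1 − 2e^{−ε²/16}. -/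
open MeasureTheory ProbabilityTheory
open Real

-- pdf * exp(t x^2) rewrite
lemma gauss_pdf_mul (σ t : ℝ) (hσ : 0 < σ) :
    (fun x => gaussianPDFReal 0 ⟨σ^2, sq_nonneg σ⟩ x * Real.exp (t * x^2))
      = fun x => (Real.sqrt (2*π*σ^2))⁻¹ * Real.exp (-(((2*σ^2)⁻¹ - t)) * x^2) := by
  funext x
  change (√(2*π*σ^2))⁻¹ * rexp (-(x - 0) ^ 2 / (2 * σ^2)) * Real.exp (t * x^2) = _
  push_cast
  rw [mul_assoc, ← Real.exp_add]
  congr 2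
  have : σ^2 ≠ 0 := by positivity
  field_simp
  ring

lemma integrable_exp_sq_gauss (σ t : ℝ) (hσ : 0 < σ) (ht : 2 * t * σ^2 < 1) :
    Integrable (fun x => Real.exp (t * x^2)) (gaussianReal 0 ⟨σ^2, sq_nonneg σ⟩) := by
  have hv : (⟨σ^2, sq_nonneg σ⟩ : NNReal) ≠ 0 := by
    intro h
    have h2 := congrArg NNReal.toReal h
    change σ^2 = 0 at h2
    nlinarith
  have hb : 0 < (2*σ^2)⁻¹ - t := by
    rw [sub_pos, inv_eq_one_div, lt_div_iff₀ (by positivity)]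
    linarith
  rw [gaussianReal_of_var_ne_zero _ hv]
  unfold gaussianPDF
  erw [integrable_withDensity_iff (measurable_gaussianPDFReal 0 _).ennreal_ofReal
      (Filter.Eventually.of_forall fun x => ENNReal.ofReal_lt_top)]
  have : (fun x => Real.exp (t * x^2) * (ENNReal.ofReal (gaussianPDFReal 0 ⟨σ^2, sq_nonneg σ⟩ x)).toReal)
      = fun x => (Real.sqrt (2*π*σ^2))⁻¹ * Real.exp (-(((2*σ^2)⁻¹ - t)) * x^2) := by
    rw [← gauss_pdf_mul σ t hσ]
    funext x
    erw [ENNReal.toReal_ofReal (gaussianPDFReal_nonneg _ _ _), mul_comm]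
  rw [this]
  exact (integrable_exp_neg_mul_sq hb).const_mul _

lemma integral_exp_sq_gauss (σ t : ℝ) (hσ : 0 < σ) (ht : 2 * t * σ^2 < 1) :
    ∫ x, Real.exp (t * x^2) ∂(gaussianReal 0 ⟨σ^2, sq_nonneg σ⟩)
      = (Real.sqrt (1 - 2*t*σ^2))⁻¹ := by
  have hv : (⟨σ^2, sq_nonneg σ⟩ : NNReal) ≠ 0 := by
    intro h
    have h2 := congrArg NNReal.toReal h
    change σ^2 = 0 at h2
    nlinarith
  have hb : 0 < (2*σ^2)⁻¹ - t := by
    rw [sub_pos, inv_eq_one_div, lt_div_iff₀ (by positivity)]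
    linarith
  rw [gaussianReal_of_var_ne_zero _ hv]
  unfold gaussianPDF
  have hd : (fun x => ENNReal.ofReal (gaussianPDFReal 0 (⟨σ^2, sq_nonneg σ⟩ : NNReal) x))
      = fun x => ((Real.toNNReal (gaussianPDFReal 0 (⟨σ^2, sq_nonneg σ⟩ : NNReal) x) : NNReal) : ENNReal) := rfl
  erw [hd, integral_withDensity_eq_integral_smul
    ((measurable_gaussianPDFReal 0 _).real_toNNReal) _]
  have : (fun x => Real.toNNReal (gaussianPDFReal 0 (⟨σ^2, sq_nonneg σ⟩ : NNReal) x) • Real.exp (t * x^2))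
      = fun x => (Real.sqrt (2*π*σ^2))⁻¹ * Real.exp (-(((2*σ^2)⁻¹ - t)) * x^2) := by
    rw [← gauss_pdf_mul σ t hσ]
    funext x
    erw [NNReal.smul_def, smul_eq_mul, Real.coe_toNNReal _ (gaussianPDFReal_nonneg _ _ _)]
  rw [this, integral_const_mul, integral_gaussian]
  rw [← Real.sqrt_inv (2*π*σ^2), ← Real.sqrt_inv (1 - 2*t*σ^2),
    ← Real.sqrt_mul (by positivity : (0:ℝ) ≤ (2*π*σ^2)⁻¹)]
  congr 1
  have hπ : (0:ℝ) < π := pi_pos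
  have hb' : ((2*σ^2)⁻¹ - t) ≠ 0 := ne_of_gt hb
  have hσ2 : σ^2 ≠ 0 := by positivity
  have hπ' : π ≠ 0 := ne_of_gt hπ
  have key2 : (2*π*σ^2) * ((2*σ^2)⁻¹ - t) = π * (1 - 2*t*σ^2) := by
    field_simp
  rw [div_eq_mul_inv, mul_left_comm, ← mul_inv, key2, mul_inv,
    ← mul_assoc, mul_inv_cancel₀ hπ', one_mul]

lemma sqrt_inv_le_exp_upper {u : ℝ} (hu0 : 0 ≤ u) (hu : u ≤ 1/8) :
    (Real.sqrt (1 - 2*u))⁻¹ ≤ Real.exp (u + 4*u^2) := by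
  have h2u : 0 < 1 - 2*u := by linarith
  have hexp : Real.exp (-(2*u + 8*u^2)) ≤ 1 - 2*u := by
    have h1 : (2*u + 8*u^2) + 1 ≤ Real.exp (2*u + 8*u^2) := Real.add_one_le_exp _
    have h2 : Real.exp (-(2*u + 8*u^2)) * Real.exp (2*u + 8*u^2) = 1 := by
      rw [← Real.exp_add, show -(2*u + 8*u^2) + (2*u + 8*u^2) = 0 by ring, Real.exp_zero]
    have h3 : (1-2*u) * ((2*u+8*u^2)+1) ≤ (1-2*u) * Real.exp (2*u+8*u^2) :=
      mul_le_mul_of_nonneg_left h1 h2u.le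
    nlinarith [Real.exp_pos (2*u+8*u^2), Real.exp_pos (-(2*u+8*u^2)), sq_nonneg u]
  have hs : Real.exp (-(u + 4*u^2)) ≤ Real.sqrt (1 - 2*u) := by
    rw [show -(u+4*u^2) = (-(2*u+8*u^2))/2 by ring, Real.exp_half]
    exact Real.sqrt_le_sqrt hexp
  calc (Real.sqrt (1-2*u))⁻¹ ≤ (Real.exp (-(u+4*u^2)))⁻¹ :=
        inv_anti₀ (Real.exp_pos _) hs
    _ = Real.exp (u+4*u^2) := by rw [← Real.exp_neg, neg_neg]

lemma sqrt_inv_le_exp_lower {w : ℝ} (hw0 : 0 ≤ w) (hw : w ≤ 1/8) :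
    (Real.sqrt (1 + 2*w))⁻¹ ≤ Real.exp (-w + 4*w^2) := by
  have hexp : Real.exp (2*w - 8*w^2) ≤ 1 + 2*w := by
    have hx1 : 2*w - 8*w^2 < 1 := by nlinarith
    have h1 : (-(2*w - 8*w^2)) + 1 ≤ Real.exp (-(2*w - 8*w^2)) := Real.add_one_le_exp _
    have h2 : Real.exp (2*w - 8*w^2) * Real.exp (-(2*w - 8*w^2)) = 1 := by
      rw [← Real.exp_add, show (2*w - 8*w^2) + -(2*w - 8*w^2) = 0 by ring, Real.exp_zero]
    have h3 : Real.exp (2*w - 8*w^2) * ((-(2*w - 8*w^2))+1)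
        ≤ Real.exp (2*w - 8*w^2) * Real.exp (-(2*w - 8*w^2)) :=
      mul_le_mul_of_nonneg_left h1 (Real.exp_pos _).le
    nlinarith [Real.exp_pos (2*w - 8*w^2), sq_nonneg w]
  have hs : Real.exp (w - 4*w^2) ≤ Real.sqrt (1 + 2*w) := by
    rw [show w - 4*w^2 = (2*w - 8*w^2)/2 by ring, Real.exp_half]
    exact Real.sqrt_le_sqrt hexp
  calc (Real.sqrt (1+2*w))⁻¹ ≤ (Real.exp (w - 4*w^2))⁻¹ :=
        inv_anti₀ (Real.exp_pos _) hs
    _ = Real.exp (-w+4*w^2) := by rw [← Real.exp_neg]; ring_nf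

set_option maxHeartbeats 1000000 in
/-- **Gaussian annulus concentration.** Let `Z` be a random vector in `ℝ^n` whose coordinates are
independent Gaussian random variables with mean `0` and variance `σ²`. Then for every
`0 ≤ ε ≤ √n`, `P[ |‖Z‖₂ − σ√n| ≤ σε ] ≥ 1 − 2 e^{−ε²/16}`. -/
theorem gaussian_annulus_concentration
    (n : ℕ) (σ : ℝ) (hσ : 0 < σ)
    (Ω : Type*) [MeasureSpace Ω] [IsProbabilityMeasure (ℙ : Measure Ω)]
    (Z : Ω → EuclideanSpace ℝ (Fin n))
    (hmeas : ∀ i : Fin n, Measurable fun ω => Z ω i)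
    (hdist : ∀ i : Fin n,
      Measure.map (fun ω => Z ω i) ℙ = gaussianReal 0 ⟨σ ^ 2, sq_nonneg σ⟩)
    (hindep : iIndepFun (fun i ω => Z ω i) ℙ) :
    ∀ ε : ℝ, 0 ≤ ε → ε ≤ Real.sqrt n →
      1 - 2 * Real.exp (-ε ^ 2 / 16) ≤
        (ℙ {ω | |‖Z ω‖ - σ * Real.sqrt n| ≤ σ * ε}).toReal := by
  intro ε hε hεn
  by_cases hcase : 1 - 2 * Real.exp (-ε ^ 2 / 16) ≤ 0
  · exact hcase.trans ENNReal.toReal_nonneg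
  push_neg at hcase
  have hεpos : 0 < ε := by
    rcases lt_or_eq_of_le hε with h | h
    · exact h
    · exfalso; rw [← h] at hcase; norm_num at hcase
  set sn := Real.sqrt n with hsn
  have hsnpos : 0 < sn := lt_of_lt_of_le hεpos hεn
  have hsq : sn^2 = n := Real.sq_sqrt (Nat.cast_nonneg n)
  have hσ2 : (0:ℝ) < σ^2 := by positivity
  set u := ε / (8 * sn) with hudef
  have hu0 : 0 < u := by positivity
  have hu8 : u ≤ 1/8 := by
    rw [hudef, div_le_div_iff₀ (by positivity) (by norm_num)]
    nlinarith
  -- the random variables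
  set Y : Fin n → Ω → ℝ := fun i ω => (Z ω i)^2 with hYdef
  have hYmeas : ∀ i, Measurable (Y i) := fun i => (hmeas i).pow_const 2
  have hYindep : iIndepFun Y ℙ :=
    hindep.comp (fun _ => fun x : ℝ => x^2) (fun _ => measurable_id.pow_const 2)
  set F : Ω → ℝ := ∑ i, Y i with hFdef
  have hFapp : ∀ ω, F ω = ∑ i, (Z ω i)^2 := fun ω => by
    rw [hFdef, Finset.sum_apply]
  have hFmeas : Measurable F := by
    have h : F = fun ω => ∑ i, Y i ω := funext fun ω => Finset.sum_apply ω Finset.univ Y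
    rw [h]
    exact Finset.measurable_sum _ (fun i _ => hYmeas i)
  have hF0 : ∀ ω, 0 ≤ F ω := fun ω => by
    rw [hFapp]
    positivity
  -- integrability and mgf computations
  have haes : ∀ r : ℝ, ∀ i : Fin n, AEStronglyMeasurable (fun x : ℝ => Real.exp (r * x^2))
      (Measure.map (fun ω => Z ω i) ℙ) := fun r i =>
    (Real.continuous_exp.comp (continuous_const.mul (continuous_pow 2))).aestronglyMeasurable
  have hIntY : ∀ r : ℝ, 2*r*σ^2 < 1 → ∀ i, Integrable (fun ω => Real.exp (r * Y i ω)) ℙ := by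
    intro r hr i
    have := (integrable_map_measure (haes r i) (hmeas i).aemeasurable).mp
      (by rw [hdist i]; exact integrable_exp_sq_gauss σ r hσ hr)
    exact this
  have hmgfY : ∀ r : ℝ, 2*r*σ^2 < 1 → ∀ i, mgf (Y i) ℙ r = (Real.sqrt (1 - 2*r*σ^2))⁻¹ := by
    intro r hr i
    have h2 := integral_map (hmeas i).aemeasurable (haes r i)
    rw [mgf]
    calc ∫ ω, Real.exp (r * Y i ω) ∂ℙ
        = ∫ x, Real.exp (r * x^2) ∂(Measure.map (fun ω => Z ω i) ℙ) := h2.symm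
      _ = (Real.sqrt (1 - 2*r*σ^2))⁻¹ := by
          rw [hdist i]; exact integral_exp_sq_gauss σ r hσ hr
  have hIntF : ∀ r : ℝ, 2*r*σ^2 < 1 → Integrable (fun ω => Real.exp (r * F ω)) ℙ := fun r hr =>
    hYindep.integrable_exp_mul_sum hYmeas (fun i _ => hIntY r hr i)
  have hmgfF : ∀ r : ℝ, 2*r*σ^2 < 1 → mgf F ℙ r = ((Real.sqrt (1 - 2*r*σ^2))⁻¹)^n := by
    intro r hr
    rw [hFdef, hYindep.mgf_sum hYmeas]
    simp only [hmgfY r hr, Finset.prod_const, Finset.card_univ, Fintype.card_fin]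
  -- the two tails
  have hmu : 2*(u/σ^2)*σ^2 = 2*u := by field_simp
  have ht1 : 2*(u/σ^2)*σ^2 < 1 := by rw [hmu]; linarith
  have ht2 : 2*(-(u/σ^2))*σ^2 < 1 := by nlinarith [div_pos hu0 hσ2]
  have hσu1 : 1 - 2*(u/σ^2)*σ^2 = 1 - 2*u := by field_simp
  have hσu2 : 1 - 2*(-(u/σ^2))*σ^2 = 1 + 2*u := by field_simp; ring
  have hup : (ℙ {ω | σ^2 * ((n:ℝ) + ε * sn) ≤ F ω}).toReal ≤ Real.exp (-ε^2/16) := by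
    have h1 := measure_ge_le_exp_mul_mgf (μ := ℙ) (X := F) (σ^2 * ((n:ℝ) + ε * sn))
      (le_of_lt (div_pos hu0 hσ2)) (hIntF _ ht1)
    rw [hmgfF _ ht1, hσu1] at h1
    refine h1.trans ?_
    have h2 : ((Real.sqrt (1 - 2*u))⁻¹)^n ≤ (Real.exp (u + 4*u^2))^n :=
      pow_le_pow_left₀ (by positivity) (sqrt_inv_le_exp_upper hu0.le hu8) n
    calc Real.exp (-(u/σ^2) * (σ^2 * ((n:ℝ) + ε * sn))) * ((Real.sqrt (1 - 2*u))⁻¹)^n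
        ≤ Real.exp (-(u/σ^2) * (σ^2 * ((n:ℝ) + ε * sn))) * (Real.exp (u + 4*u^2))^n :=
          mul_le_mul_of_nonneg_left h2 (Real.exp_pos _).le
      _ = Real.exp (-(u/σ^2) * (σ^2 * ((n:ℝ) + ε * sn)) + n * (u + 4*u^2)) := by
          rw [← Real.exp_nat_mul, ← Real.exp_add]
      _ = Real.exp (-ε^2/16) := by
          congr 1
          rw [hudef, ← hsq]
          field_simp
          ring
  have hlow : (ℙ {ω | F ω ≤ σ^2 * ((n:ℝ) - ε * sn)}).toReal ≤ Real.exp (-ε^2/16) := by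
    have h1 := measure_le_le_exp_mul_mgf (μ := ℙ) (X := F) (σ^2 * ((n:ℝ) - ε * sn))
      (neg_nonpos_of_nonneg (le_of_lt (div_pos hu0 hσ2))) (hIntF _ ht2)
    rw [hmgfF _ ht2, hσu2] at h1
    refine h1.trans ?_
    have h2 : ((Real.sqrt (1 + 2*u))⁻¹)^n ≤ (Real.exp (-u + 4*u^2))^n :=
      pow_le_pow_left₀ (by positivity) (sqrt_inv_le_exp_lower hu0.le hu8) n
    calc Real.exp (-(-(u/σ^2)) * (σ^2 * ((n:ℝ) - ε * sn))) * ((Real.sqrt (1 + 2*u))⁻¹)^n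
        ≤ Real.exp (-(-(u/σ^2)) * (σ^2 * ((n:ℝ) - ε * sn))) * (Real.exp (-u + 4*u^2))^n :=
          mul_le_mul_of_nonneg_left h2 (Real.exp_pos _).le
      _ = Real.exp (-(-(u/σ^2)) * (σ^2 * ((n:ℝ) - ε * sn)) + n * (-u + 4*u^2)) := by
          rw [← Real.exp_nat_mul, ← Real.exp_add]
      _ = Real.exp (-ε^2/16) := by
          congr 1
          rw [hudef, ← hsq]
          field_simp
          ring
  -- relate the event to F
  have hnormF : ∀ ω, ‖Z ω‖ = Real.sqrt (F ω) := by
    intro ω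
    rw [hFapp, EuclideanSpace.norm_eq]
    congr 1
    refine Finset.sum_congr rfl fun i _ => ?_
    rw [Real.norm_eq_abs, sq_abs]
  have hEeq : {ω | |‖Z ω‖ - σ * sn| ≤ σ * ε}
      = {ω | |Real.sqrt (F ω) - σ * sn| ≤ σ * ε} :=
    Set.ext fun ω => by rw [Set.mem_setOf_eq, Set.mem_setOf_eq, hnormF ω]
  have hEmeas : MeasurableSet {ω | |‖Z ω‖ - σ * sn| ≤ σ * ε} := by
    rw [hEeq]
    exact measurableSet_le
      (((Real.continuous_sqrt.measurable.comp hFmeas).sub measurable_const).abs)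
      measurable_const
  have hsub : {ω | |‖Z ω‖ - σ * sn| ≤ σ * ε}ᶜ
      ⊆ {ω | σ^2 * ((n:ℝ) + ε * sn) ≤ F ω} ∪ {ω | F ω ≤ σ^2 * ((n:ℝ) - ε * sn)} := by
    intro ω hω
    simp only [Set.mem_compl_iff, Set.mem_setOf_eq, not_le] at hω
    rw [hnormF ω] at hω
    have hr0 : 0 ≤ Real.sqrt (F ω) := Real.sqrt_nonneg _
    have hrsq : (Real.sqrt (F ω))^2 = F ω := Real.sq_sqrt (hF0 ω)
    rcases abs_cases (Real.sqrt (F ω) - σ * sn) with ⟨he, h0⟩ | ⟨he, h0⟩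
    · left
      rw [he] at hω
      simp only [Set.mem_setOf_eq]
      nlinarith [mul_pos hσ hεpos, mul_pos hσ hsnpos, sq_nonneg σ,
        mul_pos (mul_pos hσ2 hεpos) hsnpos, sq_nonneg ε]
    · right
      rw [he] at hω
      simp only [Set.mem_setOf_eq]
      have hc0 : 0 ≤ σ * sn - σ * ε := by nlinarith
      nlinarith [mul_pos (mul_pos hσ2 hεpos) hsnpos, sq_nonneg ε,
        mul_le_mul_of_nonneg_left hεn (le_of_lt (mul_pos hσ2 hεpos))]
  -- put everything together
  have hAB : (ℙ ({ω | |‖Z ω‖ - σ * sn| ≤ σ * ε}ᶜ)).toReal ≤ 2 * Real.exp (-ε^2/16) := by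
    have h1 : ℙ ({ω | |‖Z ω‖ - σ * sn| ≤ σ * ε}ᶜ)
        ≤ ℙ {ω | σ^2 * ((n:ℝ) + ε * sn) ≤ F ω} + ℙ {ω | F ω ≤ σ^2 * ((n:ℝ) - ε * sn)} :=
      le_trans (measure_mono hsub) (measure_union_le _ _)
    have h2 := ENNReal.toReal_mono
      (ENNReal.add_ne_top.mpr ⟨measure_ne_top _ _, measure_ne_top _ _⟩) h1
    rw [ENNReal.toReal_add (measure_ne_top _ _) (measure_ne_top _ _)] at h2
    linarith
  have hsplit : (ℙ {ω | |‖Z ω‖ - σ * sn| ≤ σ * ε}).toReal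
      + (ℙ ({ω | |‖Z ω‖ - σ * sn| ≤ σ * ε}ᶜ)).toReal = 1 := by
    rw [← ENNReal.toReal_add (measure_ne_top _ _) (measure_ne_top _ _),
      measure_add_measure_compl hEmeas, measure_univ, ENNReal.toReal_one]
  have hfin : -ε^2/16 = -(ε^2)/16 := by ring
  rw [show -ε ^ 2 / 16 = -ε^2/16 from rfl]
  linarith
end
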